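/- Soundness of the quadripartite embedding formulation. Let P, L be positive integers, M = 2P, and let G be a finite simple graph. Suppose there exist sets A1, A2, A3, A4 ⊆ V(G) such that: (i) A1 ∪ A2 ∪ A3 ∪ A4 = V(G); (ii) |A1| ≤ P·L, |A2| ≤ M·L, |A3| ≤ M·L, |A4| ≤ P·L; (iii) for every vertex v, the index set {k ∈ {1,2,3,4} : v ∈ Ak} is a set of consecutive integers (no gaps); and (iv) for every edge {u,v} of G, either (u ∈ A1 and v ∈ A2), or (u ∈ A2 and v ∈ A1), or (u ∈ A3 and v ∈ A4), or (u ∈ A4 and v ∈ A3). Then G is a minor of the quadripartite template graph Q_{P,L} (and hence a minor of the Chimera graph C_{M,M,L}). -/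

import Mathlib

/-- A minor model of `G` in `H`: a family of pairwise disjoint nonempty branch sets,
each inducing a connected subgraph of `H`, with an edge of `H` joining the branch sets
of any two adjacent vertices of `G`. -/
structure MinorModel {V W : Type*} (G : SimpleGraph V) (H : SimpleGraph W) where
  B : V → Set W
  nonempty : ∀ v, (B v).Nonempty
  pairwiseDisjoint : ∀ ⦃u v : V⦄, u ≠ v → Disjoint (B u) (B v)
  connected : ∀ v, (H.induce (B v)).Connected
  edge : ∀ ⦃u v : V⦄, G.Adj u v → ∃ x ∈ B u, ∃ y ∈ B v, H.Adj x y

/-- `G` is a minor of `H`. -/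
def SimpleGraph.IsMinorOf {V W : Type*} (G : SimpleGraph V) (H : SimpleGraph W) : Prop :=
  Nonempty (MinorModel G H)

/-- A bipartite assignment of `G` into the complete bipartite graph `K_{m1,m2}`. -/
def SimpleGraph.BipartiteAssignment {V : Type*} (G : SimpleGraph V) (m1 m2 : ℕ)
    (A1 A2 : Set V) : Prop :=
  A1 ∪ A2 = Set.univ ∧ A1.ncard ≤ m1 ∧ A2.ncard ≤ m2 ∧
    ∀ ⦃u v : V⦄, G.Adj u v → (u ∈ A1 ∧ v ∈ A2) ∨ (u ∈ A2 ∧ v ∈ A1)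

/-- `G − S` is bipartite, i.e. `S` is an odd cycle transversal of `G`. -/
def SimpleGraph.DelBipartite {V : Type*} (G : SimpleGraph V) (S : Set V) : Prop :=
  ∃ X Y : Set V, Disjoint X Y ∧ X ∪ Y = Sᶜ ∧
    ∀ ⦃u v : V⦄, G.Adj u v → u ∉ S → v ∉ S → (u ∈ X ∧ v ∈ Y) ∨ (u ∈ Y ∧ v ∈ X)

/-- The Chimera graph `C_{M,M,L}`. A vertex `(i, j, s, l)` consists of a row `i`, a
column `j`, a side `s` (`false` = left, `true` = right), and an index `l`.
Edges: within each cell, every left vertex is adjacent to every right vertex;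
left vertices with the same column and index and rows differing by 1 are adjacent;
right vertices with the same row and index and columns differing by 1 are adjacent. -/
def chimera (M L : ℕ) : SimpleGraph (Fin M × Fin M × Bool × Fin L) :=
  SimpleGraph.fromRel fun x y =>
    (x.1 = y.1 ∧ x.2.1 = y.2.1 ∧ x.2.2.1 = false ∧ y.2.2.1 = true) ∨
    (x.2.2.1 = false ∧ y.2.2.1 = false ∧ x.2.1 = y.2.1 ∧ x.2.2.2 = y.2.2.2 ∧
      ((x.1 : ℕ) + 1 = (y.1 : ℕ) ∨ (y.1 : ℕ) + 1 = (x.1 : ℕ))) ∨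
    (x.2.2.1 = true ∧ y.2.2.1 = true ∧ x.1 = y.1 ∧ x.2.2.2 = y.2.2.2 ∧
      ((x.2.1 : ℕ) + 1 = (y.2.1 : ℕ) ∨ (y.2.1 : ℕ) + 1 = (x.2.1 : ℕ)))

/-- The vertex set of the quadripartite template graph `Q_{P,L}`:
the four parts `U1, U2, U3, U4` with `|U1| = |U4| = P·L` and `|U2| = |U3| = 2·P·L`. -/
def QVert (P L : ℕ) : Type :=
  Fin (P * L) ⊕ Fin (2 * P * L) ⊕ Fin (2 * P * L) ⊕ Fin (P * L)

/-- The quadripartite template graph `Q_{P,L}`: every vertex of `U1` is adjacent to every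
vertex of `U2`, every vertex of `U3` is adjacent to every vertex of `U4`, and the `i`-th
vertex of `U2` is adjacent to the `i`-th vertex of `U3` (a perfect matching). -/
def qte (P L : ℕ) : SimpleGraph (QVert P L) :=
  SimpleGraph.fromRel fun x y =>
    match x, y with
    | Sum.inl _, Sum.inr (Sum.inl _) => True
    | Sum.inr (Sum.inl i), Sum.inr (Sum.inr (Sum.inl j)) => i = j
    | Sum.inr (Sum.inr (Sum.inl _)), Sum.inr (Sum.inr (Sum.inr _)) => True
    | _, _ => False

private lemma exists_injOn_mapsTo {α β : Type*} [Finite α] [Nonempty β] (s : Set α) (t : Set β)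
    (ht : t.Finite) (h : s.ncard ≤ t.ncard) :
    ∃ f : α → β, Set.InjOn f s ∧ Set.MapsTo f s t := by
  have hs : s.Finite := Set.toFinite s
  obtain ⟨f, hmap, hinj⟩ := hs.exists_injOn_of_encard_le (t := t)
    (by rw [← hs.cast_ncard_eq, ← ht.cast_ncard_eq]; exact_mod_cast h)
  exact ⟨f, hinj, fun x hx => hmap hx⟩

private lemma exists_injOn_fin {α : Type*} [Finite α] (s : Set α) (n : ℕ) (hn : 0 < n)
    (h : s.ncard ≤ n) : ∃ f : α → Fin n, Set.InjOn f s := by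
  have : Nonempty (Fin n) := ⟨⟨0, hn⟩⟩
  obtain ⟨f, hinj, -⟩ := exists_injOn_mapsTo s (Set.univ : Set (Fin n)) Set.finite_univ
    (by rwa [Set.ncard_univ, Nat.card_eq_fintype_card, Fintype.card_fin])
  exact ⟨f, hinj⟩

private lemma exists_injOn_extend_fin {α : Type*} [Finite α] (s t : Set α) (hst : s ⊆ t)
    (n : ℕ) (hn : 0 < n) (e : α → Fin n) (he : Set.InjOn e s) (h : t.ncard ≤ n) :
    ∃ f : α → Fin n, Set.InjOn f t ∧ ∀ a ∈ s, f a = e a := by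
  classical
  have hsf : s.Finite := Set.toFinite s
  have : Nonempty (Fin n) := ⟨⟨0, hn⟩⟩
  have hcard : (t \ s).ncard ≤ ((e '' s)ᶜ : Set (Fin n)).ncard := by
    have h1 : (t \ s).ncard = t.ncard - s.ncard := Set.ncard_diff hst hsf
    have h2 : (e '' s).ncard + ((e '' s)ᶜ : Set (Fin n)).ncard = n := by
      rw [Set.ncard_add_ncard_compl, Nat.card_eq_fintype_card, Fintype.card_fin]
    have h3 : (e '' s).ncard = s.ncard := Set.ncard_image_of_injOn he
    have h4 : s.ncard ≤ t.ncard := Set.ncard_le_ncard hst (Set.toFinite t)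
    omega
  obtain ⟨g, hginj, hgmap⟩ := exists_injOn_mapsTo (t \ s) ((e '' s)ᶜ) (Set.toFinite _) hcard
  refine ⟨fun a => if a ∈ s then e a else g a, ?_, fun a ha => if_pos ha⟩
  intro a ha b hb hab
  dsimp only at hab
  by_cases has : a ∈ s <;> by_cases hbs : b ∈ s
  · rw [if_pos has, if_pos hbs] at hab; exact he has hbs hab
  · rw [if_pos has, if_neg hbs] at hab
    exact absurd (Set.mem_image_of_mem e has) (hab ▸ hgmap ⟨hb, hbs⟩)
  · rw [if_neg has, if_pos hbs] at hab
    exact absurd (Set.mem_image_of_mem e hbs) (hab ▸ hgmap ⟨ha, has⟩)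
  · rw [if_neg has, if_neg hbs] at hab; exact hginj ⟨ha, has⟩ ⟨hb, hbs⟩ hab

def MinorModel.comp {U V W : Type*} {G : SimpleGraph U} {H : SimpleGraph V} {K : SimpleGraph W}
    (m1 : MinorModel G H) (m2 : MinorModel H K) : MinorModel G K where
  B v := ⋃ w ∈ m1.B v, m2.B w
  nonempty v := by
    obtain ⟨w, hw⟩ := m1.nonempty v
    obtain ⟨x, hx⟩ := m2.nonempty w
    exact ⟨x, Set.mem_biUnion hw hx⟩
  pairwiseDisjoint := by
    intro u v huv
    rw [Set.disjoint_left]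
    rintro x hx hx'
    simp only [Set.mem_iUnion] at hx hx'
    obtain ⟨w, hw, hxw⟩ := hx
    obtain ⟨w', hw', hxw'⟩ := hx'
    have hne : w ≠ w' := by
      rintro rfl
      exact (Set.disjoint_left.1 (m1.pairwiseDisjoint huv) hw) hw'
    exact Set.disjoint_left.1 (m2.pairwiseDisjoint hne) hxw hxw'
  connected v := by
    set S : Set W := ⋃ w ∈ m1.B v, m2.B w with hS
    have hsub : ∀ w, w ∈ m1.B v → m2.B w ⊆ S := fun w hw x hx => Set.mem_biUnion hw hx
    have hwithin : ∀ (w : V) (hw : w ∈ m1.B v) (x y : W) (hx : x ∈ m2.B w) (hy : y ∈ m2.B w),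
        (K.induce S).Reachable ⟨x, hsub w hw hx⟩ ⟨y, hsub w hw hy⟩ := by
      intro w hw x y hx hy
      have hr := (m2.connected w).preconnected ⟨x, hx⟩ ⟨y, hy⟩
      let φ : K.induce (m2.B w) →g K.induce S :=
        ⟨fun z => ⟨z.1, hsub w hw z.2⟩, fun {a b} hab => hab⟩
      exact hr.map φ
    have key : ∀ (a b : ↥(m1.B v)) (p : (H.induce (m1.B v)).Walk a b),
        ∀ x (hx : x ∈ m2.B a.1) y (hy : y ∈ m2.B b.1),
        (K.induce S).Reachable ⟨x, hsub a.1 a.2 hx⟩ ⟨y, hsub b.1 b.2 hy⟩ := by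
      intro a b p
      induction p with
      | @nil u => intro x hx y hy; exact hwithin u.1 u.2 x y hx hy
      | @cons a c b hac p ih =>
        intro x hx y hy
        obtain ⟨x', hx', y', hy', hadj⟩ := m2.edge (by exact hac : H.Adj a.1 c.1)
        refine (hwithin _ a.2 x x' hx hx').trans ?_
        refine (SimpleGraph.Adj.reachable ?_).trans (ih y' hy' y hy)
        exact (hadj : K.Adj x' y')
    rw [SimpleGraph.connected_iff]
    constructor
    · rintro ⟨x, hx⟩ ⟨y, hy⟩
      simp only [hS, Set.mem_iUnion] at hx hy
      obtain ⟨w, hw, hxw⟩ := hx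
      obtain ⟨w', hw', hyw⟩ := hy
      obtain ⟨p⟩ := (m1.connected v).preconnected ⟨w, hw⟩ ⟨w', hw'⟩
      exact key ⟨w, hw⟩ ⟨w', hw'⟩ p x hxw y hyw
    · obtain ⟨w, hw⟩ := m1.nonempty v
      obtain ⟨x, hx⟩ := m2.nonempty w
      exact ⟨⟨x, hsub w hw hx⟩⟩
  edge := by
    intro u v huv
    obtain ⟨w, hw, w', hw', hww'⟩ := m1.edge huv
    obtain ⟨x, hx, y, hy, hxy⟩ := m2.edge hww'
    exact ⟨x, Set.mem_biUnion hw hx, y, Set.mem_biUnion hw' hy, hxy⟩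

private lemma qte_adj12 (P L : ℕ) (i : Fin (P * L)) (j : Fin (2 * P * L)) :
    (qte P L).Adj (Sum.inl i) (Sum.inr (Sum.inl j)) := by
  refine (SimpleGraph.fromRel_adj _ _ _).2 ?_
  exact ⟨(fun h => nomatch h), Or.inl trivial⟩

private lemma qte_adj23 (P L : ℕ) (i : Fin (2 * P * L)) :
    (qte P L).Adj (Sum.inr (Sum.inl i)) (Sum.inr (Sum.inr (Sum.inl i))) := by
  refine (SimpleGraph.fromRel_adj _ _ _).2 ?_
  exact ⟨(fun h => nomatch h), Or.inl rfl⟩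

private lemma qte_adj34 (P L : ℕ) (i : Fin (2 * P * L)) (j : Fin (P * L)) :
    (qte P L).Adj (Sum.inr (Sum.inr (Sum.inl i))) (Sum.inr (Sum.inr (Sum.inr j))) := by
  refine (SimpleGraph.fromRel_adj _ _ _).2 ?_
  exact ⟨(fun h => nomatch h), Or.inl trivial⟩

private lemma induce_connected_of_chain {W : Type*} {K : SimpleGraph W} {S : Set W}
    (n : ℕ) (hn : 0 < n) (f : ℕ → W)
    (hmem : ∀ k, k < n → f k ∈ S)
    (hsurj : ∀ x ∈ S, ∃ k, k < n ∧ f k = x)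
    (hadj : ∀ k, k + 1 < n → K.Adj (f k) (f (k + 1))) :
    (K.induce S).Connected := by
  rw [SimpleGraph.connected_iff]
  have hreach : ∀ k (hk : k < n),
      (K.induce S).Reachable ⟨f 0, hmem 0 hn⟩ ⟨f k, hmem k hk⟩ := by
    intro k
    induction k with
    | zero => exact fun _ => SimpleGraph.Reachable.refl _
    | succ k ih =>
      intro hk
      have hk' : k < n := Nat.lt_of_succ_lt hk
      exact (ih hk').trans (SimpleGraph.Adj.reachable (by exact hadj k hk))
  refine ⟨?_, ⟨⟨f 0, hmem 0 hn⟩⟩⟩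
  rintro ⟨x, hx⟩ ⟨y, hy⟩
  obtain ⟨k, hk, rfl⟩ := hsurj x hx
  obtain ⟨m, hm, rfl⟩ := hsurj y hy
  exact (hreach k hk).symm.trans (hreach m hm)

private def qcB (P L : ℕ) : QVert P L → Set (Fin (2 * P) × Fin (2 * P) × Bool × Fin L) :=
  fun q =>
  match q with
  | Sum.inl a =>
      {x | x.2.2.1 = false ∧ (x.2.1 : ℕ) = ((finProdFinEquiv.symm a).1 : ℕ) ∧
        x.2.2.2 = (finProdFinEquiv.symm a).2}
  | Sum.inr (Sum.inl b) =>
      {x | x.2.2.1 = true ∧ x.1 = (finProdFinEquiv.symm b).1 ∧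
        x.2.2.2 = (finProdFinEquiv.symm b).2 ∧ (x.2.1 : ℕ) < P}
  | Sum.inr (Sum.inr (Sum.inl c)) =>
      {x | x.2.2.1 = true ∧ x.1 = (finProdFinEquiv.symm c).1 ∧
        x.2.2.2 = (finProdFinEquiv.symm c).2 ∧ P ≤ (x.2.1 : ℕ)}
  | Sum.inr (Sum.inr (Sum.inr d)) =>
      {x | x.2.2.1 = false ∧ (x.2.1 : ℕ) = P + ((finProdFinEquiv.symm d).1 : ℕ) ∧
        x.2.2.2 = (finProdFinEquiv.symm d).2}

private lemma fpfe_inj {m n : ℕ} {a b : Fin (m * n)}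
    (h1 : ((finProdFinEquiv.symm a).1 : ℕ) = ((finProdFinEquiv.symm b).1 : ℕ))
    (h2 : (finProdFinEquiv.symm a).2 = (finProdFinEquiv.symm b).2) : a = b :=
  finProdFinEquiv.symm.injective (Prod.ext (Fin.ext h1) h2)

private lemma qte_minor_chimera (P L : ℕ) (hP : 0 < P) (hL : 0 < L) :
    Nonempty (MinorModel (qte P L) (chimera (2 * P) L)) := by
  have hM : 0 < 2 * P := by omega
  refine ⟨⟨qcB P L, ?_, ?_, ?_, ?_⟩⟩
  · -- nonempty
    rintro (a | b | c | d)
    · exact ⟨(⟨0, hM⟩, ⟨(finProdFinEquiv.symm a).1.1, by have := (finProdFinEquiv.symm a).1.2; omega⟩,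
        false, (finProdFinEquiv.symm a).2), rfl, rfl, rfl⟩
    · exact ⟨((finProdFinEquiv.symm b).1, ⟨0, hM⟩, true, (finProdFinEquiv.symm b).2),
        rfl, rfl, rfl, hP⟩
    · exact ⟨((finProdFinEquiv.symm c).1, ⟨P, by omega⟩, true, (finProdFinEquiv.symm c).2),
        rfl, rfl, rfl, le_refl P⟩
    · exact ⟨(⟨0, hM⟩, ⟨P + (finProdFinEquiv.symm d).1.1,
        by have := (finProdFinEquiv.symm d).1.2; omega⟩,
        false, (finProdFinEquiv.symm d).2), rfl, rfl, rfl⟩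
  · -- pairwise disjoint
    intro u v hne
    rw [Set.disjoint_left]
    intro x hxu hxv
    rcases u with a | b | c | d <;> rcases v with a' | b' | c' | d'
    · obtain ⟨-, h2, h3⟩ := hxu; obtain ⟨-, h2', h3'⟩ := hxv
      exact hne (congrArg Sum.inl (fpfe_inj (h2 ▸ h2') (h3 ▸ h3')))
    · obtain ⟨h1, -⟩ := hxu; obtain ⟨h1', -⟩ := hxv; simp [h1] at h1'
    · obtain ⟨h1, -⟩ := hxu; obtain ⟨h1', -⟩ := hxv; simp [h1] at h1'
    · obtain ⟨-, h2, -⟩ := hxu; obtain ⟨-, h2', -⟩ := hxv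
      have := (finProdFinEquiv.symm a).1.2; omega
    · obtain ⟨h1, -⟩ := hxu; obtain ⟨h1', -⟩ := hxv; simp [h1] at h1'
    · obtain ⟨-, h2, h3, -⟩ := hxu; obtain ⟨-, h2', h3', -⟩ := hxv
      exact hne (congrArg (fun z => Sum.inr (Sum.inl z))
        (fpfe_inj (congrArg Fin.val (h2 ▸ h2')) (h3 ▸ h3')))
    · obtain ⟨-, -, -, h4⟩ := hxu; obtain ⟨-, -, -, h4'⟩ := hxv; omega
    · obtain ⟨h1, -⟩ := hxu; obtain ⟨h1', -⟩ := hxv; simp [h1] at h1'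
    · obtain ⟨h1, -⟩ := hxu; obtain ⟨h1', -⟩ := hxv; simp [h1] at h1'
    · obtain ⟨-, -, -, h4⟩ := hxu; obtain ⟨-, -, -, h4'⟩ := hxv; omega
    · obtain ⟨-, h2, h3, -⟩ := hxu; obtain ⟨-, h2', h3', -⟩ := hxv
      exact hne (congrArg (fun z => Sum.inr (Sum.inr (Sum.inl z)))
        (fpfe_inj (congrArg Fin.val (h2 ▸ h2')) (h3 ▸ h3')))
    · obtain ⟨h1, -⟩ := hxu; obtain ⟨h1', -⟩ := hxv; simp [h1] at h1'
    · obtain ⟨-, h2, -⟩ := hxu; obtain ⟨-, h2', -⟩ := hxv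
      have := (finProdFinEquiv.symm a').1.2; omega
    · obtain ⟨h1, -⟩ := hxu; obtain ⟨h1', -⟩ := hxv; simp [h1] at h1'
    · obtain ⟨h1, -⟩ := hxu; obtain ⟨h1', -⟩ := hxv; simp [h1] at h1'
    · obtain ⟨-, h2, h3⟩ := hxu; obtain ⟨-, h2', h3'⟩ := hxv
      exact hne (congrArg (fun z => Sum.inr (Sum.inr (Sum.inr z)))
        (fpfe_inj (by omega) (h3 ▸ h3')))
  · -- connected
    rintro (a | b | c | d)
    · refine induce_connected_of_chain (2 * P) hM
        (fun k => (⟨min k (2 * P - 1), by omega⟩,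
          ⟨(finProdFinEquiv.symm a).1.1, by have := (finProdFinEquiv.symm a).1.2; omega⟩,
          false, (finProdFinEquiv.symm a).2)) ?_ ?_ ?_
      · intro k hk; exact ⟨rfl, rfl, rfl⟩
      · rintro ⟨i, j, s, l⟩ ⟨h1, h2, h3⟩
        have hi := i.2
        refine ⟨i.1, hi, ?_⟩
        refine Prod.ext (Fin.ext ?_) (Prod.ext (Fin.ext ?_) (Prod.ext ?_ ?_))
        · show min i.1 (2 * P - 1) = i.1; omega
        · exact h2.symm
        · exact h1.symm
        · exact h3.symm
      · intro k hk
        refine ⟨?_, Or.inl (Or.inr (Or.inl ⟨rfl, rfl, rfl, rfl,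
          Or.inl (by omega : min k (2 * P - 1) + 1 = min (k + 1) (2 * P - 1))⟩))⟩
        intro h
        have h1 : min k (2 * P - 1) = min (k + 1) (2 * P - 1) :=
          congrArg (fun z => (z.1.1 : ℕ)) h
        omega
    · refine induce_connected_of_chain P hP
        (fun k => ((finProdFinEquiv.symm b).1, ⟨min k (P - 1), by omega⟩,
          true, (finProdFinEquiv.symm b).2)) ?_ ?_ ?_
      · intro k hk; exact ⟨rfl, rfl, rfl, by show min k (P - 1) < P; omega⟩
      · rintro ⟨i, j, s, l⟩ ⟨h1, h2, h3, h4⟩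
        have h4' : (j : ℕ) < P := h4
        refine ⟨j.1, h4, ?_⟩
        refine Prod.ext h2.symm (Prod.ext (Fin.ext ?_) (Prod.ext h1.symm h3.symm))
        show min j.1 (P - 1) = j.1; omega
      · intro k hk
        refine ⟨?_, Or.inl (Or.inr (Or.inr ⟨rfl, rfl, rfl, rfl,
          Or.inl (by omega : min k (P - 1) + 1 = min (k + 1) (P - 1))⟩))⟩
        intro h
        have h1 : min k (P - 1) = min (k + 1) (P - 1) :=
          congrArg (fun z => (z.2.1.1 : ℕ)) h
        omega
    · refine induce_connected_of_chain P hP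
        (fun k => ((finProdFinEquiv.symm c).1, ⟨min (P + k) (2 * P - 1), by omega⟩,
          true, (finProdFinEquiv.symm c).2)) ?_ ?_ ?_
      · intro k hk; exact ⟨rfl, rfl, rfl, by show P ≤ min (P + k) (2 * P - 1); omega⟩
      · rintro ⟨i, j, s, l⟩ ⟨h1, h2, h3, h4⟩
        have hj := j.2
        have h4' : P ≤ (j : ℕ) := h4
        refine ⟨j.1 - P, by omega, ?_⟩
        refine Prod.ext h2.symm (Prod.ext (Fin.ext ?_) (Prod.ext h1.symm h3.symm))
        show min (P + (j.1 - P)) (2 * P - 1) = j.1; omega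
      · intro k hk
        refine ⟨?_, Or.inl (Or.inr (Or.inr ⟨rfl, rfl, rfl, rfl,
          Or.inl (by omega : min (P + k) (2 * P - 1) + 1 = min (P + (k + 1)) (2 * P - 1))⟩))⟩
        intro h
        have h1 : min (P + k) (2 * P - 1) = min (P + (k + 1)) (2 * P - 1) :=
          congrArg (fun z => (z.2.1.1 : ℕ)) h
        omega
    · refine induce_connected_of_chain (2 * P) hM
        (fun k => (⟨min k (2 * P - 1), by omega⟩,
          ⟨P + (finProdFinEquiv.symm d).1.1, by have := (finProdFinEquiv.symm d).1.2; omega⟩,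
          false, (finProdFinEquiv.symm d).2)) ?_ ?_ ?_
      · intro k hk; exact ⟨rfl, rfl, rfl⟩
      · rintro ⟨i, j, s, l⟩ ⟨h1, h2, h3⟩
        have hi := i.2
        refine ⟨i.1, hi, ?_⟩
        refine Prod.ext (Fin.ext ?_) (Prod.ext (Fin.ext ?_) (Prod.ext ?_ ?_))
        · show min i.1 (2 * P - 1) = i.1; omega
        · exact h2.symm
        · exact h1.symm
        · exact h3.symm
      · intro k hk
        refine ⟨?_, Or.inl (Or.inr (Or.inl ⟨rfl, rfl, rfl, rfl,
          Or.inl (by omega : min k (2 * P - 1) + 1 = min (k + 1) (2 * P - 1))⟩))⟩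
        intro h
        have h1 : min k (2 * P - 1) = min (k + 1) (2 * P - 1) :=
          congrArg (fun z => (z.1.1 : ℕ)) h
        omega
  · -- edges
    intro u v huv
    rw [qte, SimpleGraph.fromRel_adj] at huv
    obtain ⟨hne, hr⟩ := huv
    rcases u with a | b | c | d <;> rcases v with a' | b' | c' | d'
    · exact hr.elim (fun h => h.elim) (fun h => h.elim)
    · -- U1 - U2
      refine ⟨((finProdFinEquiv.symm b').1,
        ⟨(finProdFinEquiv.symm a).1.1, by have := (finProdFinEquiv.symm a).1.2; omega⟩,
        false, (finProdFinEquiv.symm a).2), ⟨rfl, rfl, rfl⟩,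
        ((finProdFinEquiv.symm b').1,
        ⟨(finProdFinEquiv.symm a).1.1, by have := (finProdFinEquiv.symm a).1.2; omega⟩,
        true, (finProdFinEquiv.symm b').2),
        ⟨rfl, rfl, rfl, (finProdFinEquiv.symm a).1.2⟩, ?_⟩
      exact ⟨by simp, Or.inl (Or.inl ⟨rfl, rfl, rfl, rfl⟩)⟩
    · exact hr.elim (fun h => h.elim) (fun h => h.elim)
    · exact hr.elim (fun h => h.elim) (fun h => h.elim)
    · -- U2 - U1
      refine ⟨((finProdFinEquiv.symm b).1,
        ⟨(finProdFinEquiv.symm a').1.1, by have := (finProdFinEquiv.symm a').1.2; omega⟩,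
        true, (finProdFinEquiv.symm b).2),
        ⟨rfl, rfl, rfl, (finProdFinEquiv.symm a').1.2⟩,
        ((finProdFinEquiv.symm b).1,
        ⟨(finProdFinEquiv.symm a').1.1, by have := (finProdFinEquiv.symm a').1.2; omega⟩,
        false, (finProdFinEquiv.symm a').2), ⟨rfl, rfl, rfl⟩, ?_⟩
      exact ⟨by simp, Or.inr (Or.inl ⟨rfl, rfl, rfl, rfl⟩)⟩
    · exact hr.elim (fun h => h.elim) (fun h => h.elim)
    · -- U2 - U3
      have hbc : b = c' := hr.resolve_right id
      subst hbc
      refine ⟨((finProdFinEquiv.symm b).1, ⟨P - 1, by omega⟩, true, (finProdFinEquiv.symm b).2),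
        ⟨rfl, rfl, rfl, by show P - 1 < P; omega⟩,
        ((finProdFinEquiv.symm b).1, ⟨P, by omega⟩, true, (finProdFinEquiv.symm b).2),
        ⟨rfl, rfl, rfl, le_refl P⟩, ?_⟩
      refine ⟨?_, Or.inl (Or.inr (Or.inr ⟨rfl, rfl, rfl, rfl,
        Or.inl (by omega : P - 1 + 1 = P)⟩))⟩
      intro h
      have h1 : P - 1 = P := congrArg (fun z => (z.2.1.1 : ℕ)) h
      omega
    · exact hr.elim (fun h => h.elim) (fun h => h.elim)
    · exact hr.elim (fun h => h.elim) (fun h => h.elim)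
    · -- U3 - U2
      have hbc : b' = c := hr.resolve_left id
      subst hbc
      refine ⟨((finProdFinEquiv.symm b').1, ⟨P, by omega⟩, true, (finProdFinEquiv.symm b').2),
        ⟨rfl, rfl, rfl, le_refl P⟩,
        ((finProdFinEquiv.symm b').1, ⟨P - 1, by omega⟩, true, (finProdFinEquiv.symm b').2),
        ⟨rfl, rfl, rfl, by show P - 1 < P; omega⟩, ?_⟩
      refine ⟨?_, Or.inl (Or.inr (Or.inr ⟨rfl, rfl, rfl, rfl,
        Or.inr (by omega : P - 1 + 1 = P)⟩))⟩
      intro h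
      have h1 : (P : ℕ) = P - 1 := congrArg (fun z => (z.2.1.1 : ℕ)) h
      omega
    · exact hr.elim (fun h => h.elim) (fun h => h.elim)
    · -- U3 - U4
      refine ⟨((finProdFinEquiv.symm c).1,
        ⟨P + (finProdFinEquiv.symm d').1.1, by have := (finProdFinEquiv.symm d').1.2; omega⟩,
        true, (finProdFinEquiv.symm c).2),
        ⟨rfl, rfl, rfl, by show P ≤ P + (finProdFinEquiv.symm d').1.1; omega⟩,
        ((finProdFinEquiv.symm c).1,
        ⟨P + (finProdFinEquiv.symm d').1.1, by have := (finProdFinEquiv.symm d').1.2; omega⟩,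
        false, (finProdFinEquiv.symm d').2), ⟨rfl, rfl, rfl⟩, ?_⟩
      exact ⟨by simp, Or.inr (Or.inl ⟨rfl, rfl, rfl, rfl⟩)⟩
    · exact hr.elim (fun h => h.elim) (fun h => h.elim)
    · exact hr.elim (fun h => h.elim) (fun h => h.elim)
    · -- U4 - U3
      refine ⟨((finProdFinEquiv.symm c').1,
        ⟨P + (finProdFinEquiv.symm d).1.1, by have := (finProdFinEquiv.symm d).1.2; omega⟩,
        false, (finProdFinEquiv.symm d).2), ⟨rfl, rfl, rfl⟩,
        ((finProdFinEquiv.symm c').1,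
        ⟨P + (finProdFinEquiv.symm d).1.1, by have := (finProdFinEquiv.symm d).1.2; omega⟩,
        true, (finProdFinEquiv.symm c').2),
        ⟨rfl, rfl, rfl, by show P ≤ P + (finProdFinEquiv.symm d).1.1; omega⟩, ?_⟩
      exact ⟨by simp, Or.inl (Or.inl ⟨rfl, rfl, rfl, rfl⟩)⟩
    · exact hr.elim (fun h => h.elim) (fun h => h.elim)

/-- soundness of the quadripartite embedding formulation: if the vertices
of a finite simple graph `G` can be assigned to sets `A1, A2, A3, A4` covering `V(G)`,
with `|A1| ≤ P·L`, `|A2| ≤ 2P·L`, `|A3| ≤ 2P·L`, `|A4| ≤ P·L`, such that each vertex is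
assigned to a consecutive range of partitions (no gaps), and every edge `{u,v}` of `G` is
realized with `u ∈ A1 ∧ v ∈ A2`, or `u ∈ A2 ∧ v ∈ A1`, or `u ∈ A3 ∧ v ∈ A4`, or
`u ∈ A4 ∧ v ∈ A3`, then `G` is a minor of `Q_{P,L}` (and hence of `C_{2P,2P,L}`). -/
theorem stmt15 {V : Type*} [Fintype V] (G : SimpleGraph V) (P L : ℕ)
    (hP : 0 < P) (hL : 0 < L) (A1 A2 A3 A4 : Set V)
    (hcover : A1 ∪ A2 ∪ A3 ∪ A4 = Set.univ)
    (hc1 : A1.ncard ≤ P * L) (hc2 : A2.ncard ≤ 2 * P * L)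
    (hc3 : A3.ncard ≤ 2 * P * L) (hc4 : A4.ncard ≤ P * L)
    (hconsec : ∀ v : V,
      (v ∈ A1 ∧ v ∈ A3 → v ∈ A2) ∧
      (v ∈ A1 ∧ v ∈ A4 → v ∈ A2 ∧ v ∈ A3) ∧
      (v ∈ A2 ∧ v ∈ A4 → v ∈ A3))
    (hedge : ∀ ⦃u v : V⦄, G.Adj u v →
      (u ∈ A1 ∧ v ∈ A2) ∨ (u ∈ A2 ∧ v ∈ A1) ∨
      (u ∈ A3 ∧ v ∈ A4) ∨ (u ∈ A4 ∧ v ∈ A3)) :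
    G.IsMinorOf (qte P L) ∧ G.IsMinorOf (chimera (2 * P) L) := by
  classical
  have hPL : 0 < P * L := Nat.mul_pos hP hL
  have h2PL : 0 < 2 * P * L := by positivity
  obtain ⟨f1, hf1⟩ := exists_injOn_fin A1 (P * L) hPL hc1
  obtain ⟨f4, hf4⟩ := exists_injOn_fin A4 (P * L) hPL hc4
  obtain ⟨e, he⟩ := exists_injOn_fin (A2 ∩ A3) (2 * P * L) h2PL
    (le_trans (Set.ncard_le_ncard Set.inter_subset_left (Set.toFinite _)) hc2)
  obtain ⟨g2, hg2, hg2e⟩ := exists_injOn_extend_fin (A2 ∩ A3) A2 Set.inter_subset_left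
    (2 * P * L) h2PL e he hc2
  obtain ⟨g3, hg3, hg3e⟩ := exists_injOn_extend_fin (A2 ∩ A3) A3 Set.inter_subset_right
    (2 * P * L) h2PL e he hc3
  have hagree : ∀ v, v ∈ A2 → v ∈ A3 → g2 v = g3 v := fun v h2 h3 => by
    rw [hg2e v ⟨h2, h3⟩, hg3e v ⟨h2, h3⟩]
  let B : V → Set (QVert P L) := fun v =>
    {x | (v ∈ A1 ∧ x = Sum.inl (f1 v)) ∨ (v ∈ A2 ∧ x = Sum.inr (Sum.inl (g2 v))) ∨
      (v ∈ A3 ∧ x = Sum.inr (Sum.inr (Sum.inl (g3 v)))) ∨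
      (v ∈ A4 ∧ x = Sum.inr (Sum.inr (Sum.inr (f4 v))))}
  have hmem1 : ∀ v (_ : v ∈ A1), Sum.inl (f1 v) ∈ B v := fun v h => Or.inl ⟨h, rfl⟩
  have hmem2 : ∀ v (_ : v ∈ A2), Sum.inr (Sum.inl (g2 v)) ∈ B v :=
    fun v h => Or.inr (Or.inl ⟨h, rfl⟩)
  have hmem3 : ∀ v (_ : v ∈ A3), Sum.inr (Sum.inr (Sum.inl (g3 v))) ∈ B v :=
    fun v h => Or.inr (Or.inr (Or.inl ⟨h, rfl⟩))
  have hmem4 : ∀ v (_ : v ∈ A4), Sum.inr (Sum.inr (Sum.inr (f4 v))) ∈ B v :=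
    fun v h => Or.inr (Or.inr (Or.inr ⟨h, rfl⟩))
  have hcov : ∀ v : V, v ∈ A1 ∪ A2 ∪ A3 ∪ A4 := fun v => by
    rw [hcover]; exact Set.mem_univ v
  have model : MinorModel G (qte P L) := by
    refine ⟨B, ?_, ?_, ?_, ?_⟩
    · -- nonempty
      intro v
      rcases hcov v with ((h | h) | h) | h
      · exact ⟨_, hmem1 v h⟩
      · exact ⟨_, hmem2 v h⟩
      · exact ⟨_, hmem3 v h⟩
      · exact ⟨_, hmem4 v h⟩
    · -- pairwise disjoint
      intro u v hne
      rw [Set.disjoint_left]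
      intro x hxu hxv
      rcases hxu with ⟨h1, rfl⟩ | ⟨h1, rfl⟩ | ⟨h1, rfl⟩ | ⟨h1, rfl⟩ <;>
        rcases hxv with ⟨h2, heq⟩ | ⟨h2, heq⟩ | ⟨h2, heq⟩ | ⟨h2, heq⟩
      · exact hne (hf1 h1 h2 (Sum.inl.inj heq))
      · exact nomatch heq
      · exact nomatch heq
      · exact nomatch heq
      · exact nomatch heq
      · exact hne (hg2 h1 h2 (Sum.inl.inj (Sum.inr.inj heq)))
      · exact nomatch heq
      · exact nomatch heq
      · exact nomatch heq
      · exact nomatch heq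
      · exact hne (hg3 h1 h2 (Sum.inl.inj (Sum.inr.inj (Sum.inr.inj heq))))
      · exact nomatch heq
      · exact nomatch heq
      · exact nomatch heq
      · exact nomatch heq
      · exact hne (hf4 h1 h2 (Sum.inr.inj (Sum.inr.inj (Sum.inr.inj heq))))
    · -- connected
      intro v
      have r12 : ∀ (h1 : v ∈ A1) (h2 : v ∈ A2),
          ((qte P L).induce (B v)).Reachable ⟨_, hmem1 v h1⟩ ⟨_, hmem2 v h2⟩ :=
        fun h1 h2 => SimpleGraph.Adj.reachable (by exact qte_adj12 P L (f1 v) (g2 v))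
      have r23 : ∀ (h2 : v ∈ A2) (h3 : v ∈ A3),
          ((qte P L).induce (B v)).Reachable ⟨_, hmem2 v h2⟩ ⟨_, hmem3 v h3⟩ :=
        fun h2 h3 => SimpleGraph.Adj.reachable (by
          show (qte P L).Adj (Sum.inr (Sum.inl (g2 v))) (Sum.inr (Sum.inr (Sum.inl (g3 v))))
          rw [← hagree v h2 h3]
          exact qte_adj23 P L (g2 v))
      have r34 : ∀ (h3 : v ∈ A3) (h4 : v ∈ A4),
          ((qte P L).induce (B v)).Reachable ⟨_, hmem3 v h3⟩ ⟨_, hmem4 v h4⟩ :=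
        fun h3 h4 => SimpleGraph.Adj.reachable (by exact qte_adj34 P L (g3 v) (f4 v))
      rw [SimpleGraph.connected_iff]
      constructor
      · rintro ⟨x, hx⟩ ⟨y, hy⟩
        rcases hx with ⟨h1, rfl⟩ | ⟨h1, rfl⟩ | ⟨h1, rfl⟩ | ⟨h1, rfl⟩ <;>
          rcases hy with ⟨h1', rfl⟩ | ⟨h1', rfl⟩ | ⟨h1', rfl⟩ | ⟨h1', rfl⟩
        · exact SimpleGraph.Reachable.refl _
        · exact r12 h1 h1'
        · have h2 := (hconsec v).1 ⟨h1, h1'⟩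
          exact (r12 h1 h2).trans (r23 h2 h1')
        · obtain ⟨h2, h3⟩ := (hconsec v).2.1 ⟨h1, h1'⟩
          exact ((r12 h1 h2).trans (r23 h2 h3)).trans (r34 h3 h1')
        · exact (r12 h1' h1).symm
        · exact SimpleGraph.Reachable.refl _
        · exact r23 h1 h1'
        · have h3 := (hconsec v).2.2 ⟨h1, h1'⟩
          exact (r23 h1 h3).trans (r34 h3 h1')
        · have h2 := (hconsec v).1 ⟨h1', h1⟩
          exact ((r12 h1' h2).trans (r23 h2 h1)).symm
        · exact (r23 h1' h1).symm
        · exact SimpleGraph.Reachable.refl _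
        · exact r34 h1 h1'
        · obtain ⟨h2, h3⟩ := (hconsec v).2.1 ⟨h1', h1⟩
          exact (((r12 h1' h2).trans (r23 h2 h3)).trans (r34 h3 h1)).symm
        · have h3 := (hconsec v).2.2 ⟨h1', h1⟩
          exact ((r23 h1' h3).trans (r34 h3 h1)).symm
        · exact (r34 h1' h1).symm
        · exact SimpleGraph.Reachable.refl _
      · rcases hcov v with ((h | h) | h) | h
        · exact ⟨⟨_, hmem1 v h⟩⟩
        · exact ⟨⟨_, hmem2 v h⟩⟩
        · exact ⟨⟨_, hmem3 v h⟩⟩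
        · exact ⟨⟨_, hmem4 v h⟩⟩
    · -- edges
      intro u w huw
      rcases hedge huw with ⟨hu, hw⟩ | ⟨hu, hw⟩ | ⟨hu, hw⟩ | ⟨hu, hw⟩
      · exact ⟨_, hmem1 u hu, _, hmem2 w hw, qte_adj12 P L (f1 u) (g2 w)⟩
      · exact ⟨_, hmem2 u hu, _, hmem1 w hw, (qte_adj12 P L (f1 w) (g2 u)).symm⟩
      · exact ⟨_, hmem3 u hu, _, hmem4 w hw, qte_adj34 P L (g3 u) (f4 w)⟩
      · exact ⟨_, hmem4 u hu, _, hmem3 w hw, (qte_adj34 P L (g3 w) (f4 u)).symm⟩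
  obtain ⟨mqc⟩ := qte_minor_chimera P L hP hL
  exact ⟨⟨model⟩, ⟨model.comp mqc⟩⟩
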